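/- Let n ≥ 1 and C₀, α ∈ (0,∞). Let Ω ⊂ ℝⁿ be a measurable set, x₀ ∈ ℝⁿ, r₀ ∈ (0,∞) and Q₀ := Q(x₀,r₀). Let D : (0,∞)×Ω×Ω → ℂ satisfy |D_t(x,y)| ≤ C₀ t^{-n} exp(−α‖x−y‖_∞²/t²) for all t ∈ (0,∞) and x,y ∈ Ω, and let a : Ω×(0,∞) → ℂ be measurable, supported in (Q₀∩Ω)×(0,r₀), with ‖a‖ := ( ∫₀^{r₀} ∫_{Q₀∩Ω} |a(y,t)|² dy dt/t )^{1/2} < ∞. Then there exists C, depending only on n, C₀ and α, such that for every x ∈ Ω with ‖x−x₀‖_∞ ≥ 2r₀: ∫₀^{r₀} ∫_{Q₀∩Ω} |D_t(x,y)| |a(y,t)| dy dt/t ≤ C ‖x−x₀‖_∞^{-(n+1)} r₀ |Q₀∩Ω|^{1/2} ‖a‖. -/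

import Mathlib

open MeasureTheory ENNReal

private lemma exp_neg_le_aux (m : ℕ) {u : ℝ} (hu : 0 < u) :
    Real.exp (-u) ≤ (Nat.factorial m : ℝ) / u ^ m := by
  have h := Real.pow_div_factorial_le_exp (x := u) hu.le m
  have hm : (0:ℝ) < (Nat.factorial m : ℝ) := by exact_mod_cast Nat.factorial_pos m
  have hum : (0:ℝ) < u ^ m := by positivity
  rw [Real.exp_neg, inv_le_comm₀ (Real.exp_pos u) (by positivity)]
  rw [div_le_iff₀ hm] at h
  rw [inv_div, div_le_iff₀ hm]
  linarith

private lemma sqrt_mul_sqrt_aux (s w : ℝ≥0∞) (hs' : s ≠ ⊤) :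
    s * w ≤ (w ^ 2 / s) ^ (1/2:ℝ) * (s ^ 3) ^ (1/2:ℝ) := by
  rcases eq_or_ne s 0 with hs | hs
  · simp [hs]
  · rw [← ENNReal.mul_rpow_of_nonneg _ _ (by norm_num : (0:ℝ) ≤ 1/2)]
    have he : w ^ 2 / s * s ^ 3 = (s * w) ^ 2 := by
      calc w ^ 2 / s * s ^ 3 = (w ^ 2 / s * s) * s ^ 2 := by ring
        _ = w ^ 2 * s ^ 2 := by rw [ENNReal.div_mul_cancel hs hs']
        _ = (s * w) ^ 2 := by ring
    rw [he, ← ENNReal.rpow_natCast (s * w) 2, ← ENNReal.rpow_mul]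
    norm_num

theorem stmt17 (n : ℕ) (hn : 1 ≤ n) (C₀ α : ℝ) (hC₀ : 0 < C₀) (hα : 0 < α) :
    ∃ C : ℝ, 0 < C ∧
    ∀ (Ω : Set (Fin n → ℝ)), MeasurableSet Ω →
    ∀ (x₀ : Fin n → ℝ) (r₀ : ℝ), 0 < r₀ →
    ∀ D : ℝ → (Fin n → ℝ) → (Fin n → ℝ) → ℂ,
      (∀ t : ℝ, 0 < t → ∀ x ∈ Ω, ∀ y ∈ Ω,
        ‖D t x y‖ ≤
          C₀ * t ^ (-(n : ℝ)) * Real.exp (-(α * dist x y ^ 2 / t ^ 2))) →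
    ∀ a : (Fin n → ℝ) → ℝ → ℂ,
      Measurable (fun q : (Fin n → ℝ) × ℝ => a q.1 q.2) →
      (Function.support (fun q : (Fin n → ℝ) × ℝ => a q.1 q.2) ⊆
        (Metric.closedBall x₀ (r₀ / 2) ∩ Ω) ×ˢ Set.Ioo 0 r₀) →
      ((∫⁻ t in Set.Ioo (0:ℝ) r₀, ∫⁻ y in Metric.closedBall x₀ (r₀ / 2) ∩ Ω,
          (‖a y t‖₊ : ℝ≥0∞) ^ 2 / ENNReal.ofReal t) ^ (1/2 : ℝ)) < ⊤ →
    ∀ x ∈ Ω, 2 * r₀ ≤ dist x x₀ →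
      (∫⁻ t in Set.Ioo (0:ℝ) r₀, ∫⁻ y in Metric.closedBall x₀ (r₀ / 2) ∩ Ω,
          ENNReal.ofReal (‖D t x y‖ * ‖a y t‖ / t)) ≤
        ENNReal.ofReal (C * dist x x₀ ^ (-((n : ℝ) + 1)) * r₀) *
          (volume (Metric.closedBall x₀ (r₀ / 2) ∩ Ω)) ^ (1/2 : ℝ) *
          (∫⁻ t in Set.Ioo (0:ℝ) r₀, ∫⁻ y in Metric.closedBall x₀ (r₀ / 2) ∩ Ω,
            (‖a y t‖₊ : ℝ≥0∞) ^ 2 / ENNReal.ofReal t) ^ (1/2 : ℝ) := by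
  have hK : (0:ℝ) < C₀ * (Nat.factorial (n+1) : ℝ) * (16/(9*α))^(n+1) := by positivity
  refine ⟨C₀ * (Nat.factorial (n+1) : ℝ) * (16/(9*α))^(n+1) / 2^(n+1), by positivity, ?_⟩
  set K : ℝ := C₀ * (Nat.factorial (n+1) : ℝ) * (16/(9*α))^(n+1) with hKdef
  set C : ℝ := K / 2^(n+1) with hCdef
  intro Ω hΩ x₀ r₀ hr₀ D hD a hameas hsupp hnorm x hxΩ hdist
  set Q : Set (Fin n → ℝ) := Metric.closedBall x₀ (r₀/2) ∩ Ω with hQdef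
  have hQm : MeasurableSet Q := measurableSet_closedBall.inter hΩ
  set d : ℝ := dist x x₀ with hd
  have hd0 : 0 < d := lt_of_lt_of_le (by positivity) hdist
  have hdpow : d ^ (-((n:ℝ)+1)) = (d ^ (n+1))⁻¹ := by
    rw [show -((n:ℝ)+1) = -(((n+1:ℕ)):ℝ) by push_cast; ring, Real.rpow_neg hd0.le,
      Real.rpow_natCast]
  set c : ℝ := C * d ^ (-((n:ℝ)+1)) / r₀ with hc
  have hc0 : 0 ≤ c := by rw [hc, hdpow, hCdef]; positivity
  -- pointwise real bound
  have key : ∀ t ∈ Set.Ioo (0:ℝ) r₀, ∀ y ∈ Q,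
      ‖D t x y‖ * ‖a y t‖ / t ≤ c * (t * ‖a y t‖) := by
    intro t ht y hy
    obtain ⟨ht0, htr⟩ := ht
    have hyB : dist y x₀ ≤ r₀/2 := by
      have := hy.1; rwa [Metric.mem_closedBall] at this
    have hDb := hD t ht0 x hxΩ y hy.2
    have hdxy : 3/4*d ≤ dist x y := by
      have h1 : d ≤ dist x y + dist y x₀ := dist_triangle x y x₀
      linarith
    have hker : ‖D t x y‖ / t ≤ c * t := by
      have hrp : t ^ (-(n:ℝ)) = (t ^ n)⁻¹ := by
        rw [Real.rpow_neg ht0.le, Real.rpow_natCast]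
      have hu : (0:ℝ) < 9/16*α*d^2/t^2 := by positivity
      have hexp : Real.exp (-(α * dist x y ^2 / t^2)) ≤
          (Nat.factorial (n+1) : ℝ) / (9/16*α*d^2/t^2)^(n+1) := by
        refine le_trans ?_ (exp_neg_le_aux (n+1) hu)
        apply Real.exp_le_exp.2
        have hsq : 9/16*d^2 ≤ dist x y^2 := by
          nlinarith [dist_nonneg (x := x) (y := y)]
        have ht2 : (0:ℝ) < t^2 := by positivity
        rw [neg_le_neg_iff, div_le_div_iff₀ ht2 ht2]
        have h9 := mul_le_mul_of_nonneg_left hsq (le_of_lt (by positivity : (0:ℝ) < α*t^2))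
        nlinarith
      have hct : c * t = K/2^(n+1) * (d^(n+1))⁻¹ * t / r₀ := by
        rw [hc, hdpow, hCdef]; ring
      have e2 : C₀ * (t^n)⁻¹ * ((Nat.factorial (n+1) : ℝ) / (9/16*α*d^2/t^2)^(n+1)) / t
          = K * t^(n+1) / d^(2*(n+1)) := by
        rw [hKdef]
        have := ht0.ne'; have := hα.ne'; have := hd0.ne'
        have e : (16 / (9 * α)) ^ (n + 1) = ((9/16*α)^(n+1))⁻¹ := by
          rw [← inv_pow]; congr 1; field_simp
        rw [e, div_pow, mul_pow, pow_mul]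
        field_simp
        ring
      have base : 2^(n+1) * t^(n+1) * (d^(n+1) * r₀) ≤ t * d^(2*(n+1)) := by
        have h1 : (2*t)^n ≤ d^n := pow_le_pow_left₀ (by linarith) (by linarith) n
        calc 2^(n+1) * t^(n+1) * (d^(n+1)*r₀) = ((2*t)^n * (t*(2*r₀))) * d^(n+1) := by ring
          _ ≤ (d^n * (t*d)) * d^(n+1) := by
              have h2 : t*(2*r₀) ≤ t*d := mul_le_mul_of_nonneg_left hdist ht0.le
              have := mul_le_mul h1 h2 (by positivity) (by positivity)
              exact mul_le_mul_of_nonneg_right this (by positivity)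
          _ = t * d^(2*(n+1)) := by ring
      have e3 : K * t^(n+1) / d^(2*(n+1)) ≤ K/2^(n+1) * (d^(n+1))⁻¹ * t / r₀ := by
        have hrhs : K/2^(n+1) * (d^(n+1))⁻¹ * t / r₀ = (K*t) / (2^(n+1) * d^(n+1) * r₀) := by
          field_simp
        rw [hrhs, div_le_div_iff₀ (by positivity) (by positivity)]
        calc K * t^(n+1) * (2^(n+1) * d^(n+1) * r₀)
            = K * (2^(n+1) * t^(n+1) * (d^(n+1)*r₀)) := by ring
          _ ≤ K * (t * d^(2*(n+1))) := mul_le_mul_of_nonneg_left base hK.le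
          _ = K * t * d^(2*(n+1)) := by ring
      rw [hct]
      calc ‖D t x y‖ / t
          ≤ (C₀ * t ^ (-(n:ℝ)) * Real.exp (-(α * dist x y ^2 / t^2))) / t := by gcongr
        _ = C₀ * (t^n)⁻¹ * Real.exp (-(α * dist x y ^2 / t^2)) / t := by rw [hrp]
        _ ≤ C₀ * (t^n)⁻¹ * ((Nat.factorial (n+1) : ℝ) / (9/16*α*d^2/t^2)^(n+1)) / t := by
            gcongr
        _ = K * t^(n+1) / d^(2*(n+1)) := e2
        _ ≤ K/2^(n+1) * (d^(n+1))⁻¹ * t / r₀ := e3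
    calc ‖D t x y‖ * ‖a y t‖ / t
        = (‖D t x y‖ / t) * ‖a y t‖ := by ring
      _ ≤ (c*t) * ‖a y t‖ :=
          mul_le_mul_of_nonneg_right hker (norm_nonneg _)
      _ = c * (t * ‖a y t‖) := by ring
  -- ENNReal part
  have hm2 : Measurable fun p : ℝ × (Fin n → ℝ) => a p.2 p.1 := hameas.comp measurable_swap
  set F : ℝ × (Fin n → ℝ) → ℝ≥0∞ := fun p => (‖a p.2 p.1‖₊ : ℝ≥0∞) ^ 2 / ENNReal.ofReal p.1
    with hF
  set G : ℝ × (Fin n → ℝ) → ℝ≥0∞ := fun p => ENNReal.ofReal p.1 ^ 3 with hG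
  have hFm : Measurable F := by
    apply Measurable.div
    · exact hm2.nnnorm.coe_nnreal_ennreal.pow_const 2
    · exact ENNReal.measurable_ofReal.comp measurable_fst
  have hGm : Measurable G := (ENNReal.measurable_ofReal.comp measurable_fst).pow_const 3
  have hHm : Measurable fun p : ℝ × (Fin n → ℝ) => ENNReal.ofReal p.1 * (‖a p.2 p.1‖₊ : ℝ≥0∞) :=
    (ENNReal.measurable_ofReal.comp measurable_fst).mul hm2.nnnorm.coe_nnreal_ennreal
  set μ : Measure (ℝ × (Fin n → ℝ)) :=
    (volume.restrict (Set.Ioo (0:ℝ) r₀)).prod (volume.restrict Q) with hμ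
  set A : ℝ≥0∞ := ∫⁻ t in Set.Ioo (0:ℝ) r₀, ∫⁻ y in Q,
    (‖a y t‖₊ : ℝ≥0∞) ^ 2 / ENNReal.ofReal t with hA
  have step1 : (∫⁻ t in Set.Ioo (0:ℝ) r₀, ∫⁻ y in Q,
      ENNReal.ofReal (‖D t x y‖ * ‖a y t‖ / t)) ≤
      ENNReal.ofReal c * ∫⁻ t in Set.Ioo (0:ℝ) r₀, ∫⁻ y in Q,
        ENNReal.ofReal t * (‖a y t‖₊ : ℝ≥0∞) := by
    rw [← lintegral_const_mul' _ _ ENNReal.ofReal_ne_top]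
    refine lintegral_mono_ae ?_
    filter_upwards [ae_restrict_mem measurableSet_Ioo] with t ht
    rw [← lintegral_const_mul' _ _ ENNReal.ofReal_ne_top]
    refine lintegral_mono_ae ?_
    filter_upwards [ae_restrict_mem hQm] with y hy
    calc ENNReal.ofReal (‖D t x y‖ * ‖a y t‖ / t)
        ≤ ENNReal.ofReal (c * (t * ‖a y t‖)) :=
          ENNReal.ofReal_le_ofReal (key t ht y hy)
      _ = ENNReal.ofReal c * (ENNReal.ofReal t * (‖a y t‖₊ : ℝ≥0∞)) := by
          rw [ENNReal.ofReal_mul hc0, ENNReal.ofReal_mul ht.1.le, 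
            ofReal_norm, enorm_eq_nnnorm]
  have hprodH : (∫⁻ t in Set.Ioo (0:ℝ) r₀, ∫⁻ y in Q,
      ENNReal.ofReal t * (‖a y t‖₊ : ℝ≥0∞)) =
      ∫⁻ p, ENNReal.ofReal p.1 * (‖a p.2 p.1‖₊ : ℝ≥0∞) ∂μ :=
    (lintegral_prod _ hHm.aemeasurable).symm
  have hpt : ∀ p : ℝ × (Fin n → ℝ),
      ENNReal.ofReal p.1 * (‖a p.2 p.1‖₊ : ℝ≥0∞) ≤ (F p) ^ (1/2:ℝ) * (G p) ^ (1/2:ℝ) :=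
    fun p => sqrt_mul_sqrt_aux _ _ ENNReal.ofReal_ne_top
  have hsqr : ∀ z : ℝ≥0∞, (z ^ (1/2:ℝ)) ^ (2:ℝ) = z := fun z => by
    rw [← ENNReal.rpow_mul]; norm_num
  have hHolder : (∫⁻ p, (F p) ^ (1/2:ℝ) * (G p) ^ (1/2:ℝ) ∂μ) ≤
      (∫⁻ p, F p ∂μ) ^ (1/2:ℝ) * (∫⁻ p, G p ∂μ) ^ (1/2:ℝ) := by
    have h2 : (2:ℝ).HolderConjugate 2 := Real.HolderConjugate.two_two
    have := ENNReal.lintegral_mul_le_Lp_mul_Lq μ h2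
      (f := fun p => (F p) ^ (1/2:ℝ)) (g := fun p => (G p) ^ (1/2:ℝ))
      (hFm.pow_const _).aemeasurable (hGm.pow_const _).aemeasurable
    simp only [hsqr] at this
    exact this
  have hFA : (∫⁻ p, F p ∂μ) = A := lintegral_prod _ hFm.aemeasurable
  have hGbound : (∫⁻ p, G p ∂μ) ≤ ENNReal.ofReal r₀ ^ 4 * volume Q := by
    rw [lintegral_prod _ hGm.aemeasurable]
    calc ∫⁻ t in Set.Ioo (0:ℝ) r₀, ∫⁻ _ in Q, ENNReal.ofReal t ^ 3
        = ∫⁻ t in Set.Ioo (0:ℝ) r₀, ENNReal.ofReal t ^ 3 * volume Q := by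
          refine lintegral_congr fun t => ?_
          rw [lintegral_const, Measure.restrict_apply_univ]
      _ ≤ ∫⁻ _ in Set.Ioo (0:ℝ) r₀, ENNReal.ofReal r₀ ^ 3 * volume Q := by
          refine lintegral_mono_ae ?_
          filter_upwards [ae_restrict_mem measurableSet_Ioo] with t ht
          gcongr
          exact ht.2.le
      _ = ENNReal.ofReal r₀ ^ 3 * volume Q * volume (Set.Ioo (0:ℝ) r₀) := by
          rw [lintegral_const, Measure.restrict_apply_univ]
      _ = ENNReal.ofReal r₀ ^ 4 * volume Q := by
          rw [Real.volume_Ioo, sub_zero]; ring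
  have h4 : (ENNReal.ofReal r₀ ^ 4 * volume Q) ^ (1/2:ℝ)
      = ENNReal.ofReal r₀ ^ 2 * volume Q ^ (1/2:ℝ) := by
    rw [ENNReal.mul_rpow_of_nonneg _ _ (by norm_num : (0:ℝ) ≤ 1/2)]
    congr 1
    rw [← ENNReal.rpow_natCast (ENNReal.ofReal r₀) 4, ← ENNReal.rpow_mul,
      ← ENNReal.rpow_natCast (ENNReal.ofReal r₀) 2]
    norm_num
  calc (∫⁻ t in Set.Ioo (0:ℝ) r₀, ∫⁻ y in Q,
        ENNReal.ofReal (‖D t x y‖ * ‖a y t‖ / t))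
      ≤ ENNReal.ofReal c * ∫⁻ t in Set.Ioo (0:ℝ) r₀, ∫⁻ y in Q,
        ENNReal.ofReal t * (‖a y t‖₊ : ℝ≥0∞) := step1
    _ = ENNReal.ofReal c * ∫⁻ p, ENNReal.ofReal p.1 * (‖a p.2 p.1‖₊ : ℝ≥0∞) ∂μ := by
        rw [hprodH]
    _ ≤ ENNReal.ofReal c * ((∫⁻ p, F p ∂μ) ^ (1/2:ℝ) * (∫⁻ p, G p ∂μ) ^ (1/2:ℝ)) := by
        gcongr
        exact le_trans (lintegral_mono hpt) hHolder
    _ ≤ ENNReal.ofReal c * (A ^ (1/2:ℝ) * (ENNReal.ofReal r₀ ^ 4 * volume Q) ^ (1/2:ℝ)) := by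
        rw [hFA]
        gcongr
    _ = ENNReal.ofReal c * ENNReal.ofReal r₀ ^ 2 * volume Q ^ (1/2:ℝ) * A ^ (1/2:ℝ) := by
        rw [h4]; ring
    _ = ENNReal.ofReal (C * d ^ (-((n:ℝ)+1)) * r₀) * volume Q ^ (1/2:ℝ) * A ^ (1/2:ℝ) := by
        congr 2
        rw [← ENNReal.ofReal_pow hr₀.le, ← ENNReal.ofReal_mul hc0]
        congr 1
        rw [hc]
        field_simp
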